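/- For every real ε with 0 < ε < 1 there exists a constant C > 0 such that for every integer n ≥ 2 there is a nonempty set S ⊆ {1, 2, ..., n−1} with the following properties: (i) S is symmetric, i.e., s ∈ S if and only if n − s ∈ S; (ii) |S| ≤ C · log₂ n; and (iii) for every k ∈ {1, 2, ..., n−1}, |Σ_{s ∈ S} exp(2πi·k·s/n)| ≤ max(ε, 1/(n−1)) · |S|. (Such an S defines an undirected simple d-regular circulant graph G_n on n vertices with d = |S|, whose adjacency-matrix eigenvalues other than d are exactly the sums Σ_{s ∈ S} exp(2πi·k·s/n) for k = 1, ..., n−1; thus λ(G_n) ≤ max(ε, 1/(n−1)) · d.) -/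

import Mathlib

open Finset

theorem geomsum (n k : ℕ) (hk : k ∈ Finset.Ioo 0 n) :
    ∑ s ∈ Finset.range n, Complex.exp (2 * Real.pi * Complex.I * k * s / n) = 0 := by
  obtain ⟨hk0, hkn⟩ := Finset.mem_Ioo.mp hk
  have hn : 0 < n := lt_trans hk0 hkn
  have hnC : (n:ℂ) ≠ 0 := Nat.cast_ne_zero.mpr hn.ne'
  set x : ℂ := Complex.exp (2 * Real.pi * Complex.I * k / n) with hx
  have hxs : ∀ s : ℕ, Complex.exp (2 * Real.pi * Complex.I * k * s / n) = x ^ s := by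
    intro s
    rw [hx, ← Complex.exp_nat_mul]
    ring_nf
  have hx1 : x ≠ 1 := by
    rw [hx, Ne, Complex.exp_eq_one_iff]
    rintro ⟨m, hm⟩
    have h2 : (2 * Real.pi * Complex.I) ≠ 0 := by
      simp [Real.pi_ne_zero, Complex.I_ne_zero, Complex.ofReal_ne_zero]
    have : (k : ℂ) = m * n := by
      rw [div_eq_iff hnC] at hm
      have h3 : (k:ℂ) * (2 * Real.pi * Complex.I) = ((m:ℂ) * n) * (2 * Real.pi * Complex.I) := by
        linear_combination hm
      exact mul_right_cancel₀ h2 h3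
    have hkm : (k : ℤ) = m * n := by exact_mod_cast this
    have : (n : ℤ) ∣ (k : ℤ) := ⟨m, by linarith [hkm]⟩
    have : n ∣ k := Int.ofNat_dvd.mp (by exact_mod_cast this)
    exact absurd (Nat.le_of_dvd hk0 this) (not_le.mpr hkn)
  have hxn : x ^ n = 1 := by
    rw [hx, ← Complex.exp_nat_mul]
    rw [show (n:ℂ) * (2 * Real.pi * Complex.I * k / n) = k * (2 * Real.pi * Complex.I) by field_simp]
    exact Complex.exp_nat_mul_two_pi_mul_I k
  simp_rw [hxs]
  rw [geom_sum_eq hx1, hxn]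
  simp

theorem Ioo_erase (n : ℕ) : Finset.Ioo 0 n = (Finset.range n).erase 0 := by
  ext s; simp [Nat.pos_iff_ne_zero, and_comm]

theorem sumIoo (n k : ℕ) (hk : k ∈ Finset.Ioo 0 n) :
    ∑ s ∈ Finset.Ioo 0 n, Complex.exp (2 * Real.pi * Complex.I * k * s / n) = -1 := by
  have hn : 0 < n := lt_trans (Finset.mem_Ioo.mp hk).1 (Finset.mem_Ioo.mp hk).2
  rw [Ioo_erase, Finset.sum_erase_eq_sub (Finset.mem_range.mpr hn), geomsum n k hk]
  norm_num

theorem cossum (n k : ℕ) (hk : k ∈ Finset.Ioo 0 n) :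
    ∑ s ∈ Finset.Ioo 0 n, Real.cos (2 * Real.pi * k * s / n) = -1 := by
  have h1 : ∀ s : ℕ, Complex.exp (2 * Real.pi * Complex.I * k * s / n)
      = Complex.exp ((2 * Real.pi * k * s / n : ℝ) * Complex.I) := by
    intro s; congr 1; push_cast; ring
  have h2 := sumIoo n k hk
  simp_rw [h1] at h2
  have h3 := congrArg Complex.re h2
  rw [Complex.re_sum] at h3
  simp_rw [Complex.exp_ofReal_mul_I_re] at h3
  simpa using h3

noncomputable def Xc (n k s : ℕ) : ℝ := 2 * Real.cos (2 * Real.pi * k * s / n)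

noncomputable def Lc (n : ℕ) (d : ℕ) (k : ℕ) (f : Fin d → ℕ) : ℝ := ∑ i, Xc n k (f i)

theorem Xabs (n k s : ℕ) : |Xc n k s| ≤ 2 := by
  rw [Xc, abs_mul, abs_two]
  linarith [Real.abs_cos_le_one (2 * Real.pi * k * s / n)]

theorem Xsum (n k : ℕ) (hk : k ∈ Finset.Ioo 0 n) : ∑ s ∈ Finset.Ioo 0 n, Xc n k s = -2 := by
  simp only [Xc, ← Finset.mul_sum, cossum n k hk]
  norm_num

theorem expquad {y : ℝ} (hy : |y| ≤ 1) : Real.exp y ≤ 1 + y + y ^ 2 := by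
  have h := Real.exp_bound hy (by norm_num : 0 < 2)
  norm_num [Finset.sum_range_succ, Nat.factorial] at h
  rw [abs_le] at h
  nlinarith [sq_abs y, sq_nonneg y]

theorem cardIoo (n : ℕ) (hn : 2 ≤ n) : (((Finset.Ioo 0 n).card : ℕ) : ℝ) = (n:ℝ) - 1 := by
  rw [Nat.card_Ioo, Nat.sub_zero, Nat.cast_sub (by omega : 1 ≤ n), Nat.cast_one]

theorem rowbound (n k : ℕ) (hn : 2 ≤ n) (hk : k ∈ Finset.Ioo 0 n) {c : ℝ} (hc : |c| ≤ 1/2) :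
    ∑ s ∈ Finset.Ioo 0 n, Real.exp (c * Xc n k s) ≤
      ((n:ℝ) - 1) * Real.exp (2*|c|/((n:ℝ)-1) + 4*c^2) := by
  have hcard := cardIoo n hn
  have hN : (0:ℝ) < (n:ℝ) - 1 := by
    have : (2:ℝ) ≤ n := by exact_mod_cast hn
    linarith
  have step1 : ∀ s ∈ Finset.Ioo 0 n, Real.exp (c * Xc n k s) ≤ 1 + c * Xc n k s + c^2 * (Xc n k s)^2 := by
    intro s _
    have h1 : |c * Xc n k s| ≤ 1 := by
      rw [abs_mul]
      calc |c| * |Xc n k s| ≤ (1/2) * 2 := mul_le_mul hc (Xabs n k s) (abs_nonneg _) (by norm_num)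
      _ = 1 := by norm_num
    calc Real.exp (c * Xc n k s) ≤ 1 + c * Xc n k s + (c * Xc n k s)^2 := expquad h1
    _ = 1 + c * Xc n k s + c^2 * (Xc n k s)^2 := by ring
  have step2 : ∑ s ∈ Finset.Ioo 0 n, Real.exp (c * Xc n k s) ≤
      ((n:ℝ)-1) + 2*|c| + 4*c^2*((n:ℝ)-1) := by
    calc ∑ s ∈ Finset.Ioo 0 n, Real.exp (c * Xc n k s)
        ≤ ∑ s ∈ Finset.Ioo 0 n, (1 + c * Xc n k s + c^2 * (Xc n k s)^2) := Finset.sum_le_sum step1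
      _ = ((n:ℝ)-1) + c * (-2) + c^2 * ∑ s ∈ Finset.Ioo 0 n, (Xc n k s)^2 := by
          rw [Finset.sum_add_distrib, Finset.sum_add_distrib, ← Finset.mul_sum, ← Finset.mul_sum,
            Xsum n k hk, Finset.sum_const, nsmul_eq_mul, hcard]; ring
      _ ≤ ((n:ℝ)-1) + 2*|c| + 4*c^2*((n:ℝ)-1) := by
          have hb : ∑ s ∈ Finset.Ioo 0 n, (Xc n k s)^2 ≤ 4*((n:ℝ)-1) := by
            calc ∑ s ∈ Finset.Ioo 0 n, (Xc n k s)^2 ≤ ∑ s ∈ Finset.Ioo 0 n, (4:ℝ) := by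
                  apply Finset.sum_le_sum; intro s _
                  have := Xabs n k s
                  nlinarith [abs_nonneg (Xc n k s), sq_abs (Xc n k s)]
              _ = 4*((n:ℝ)-1) := by rw [Finset.sum_const, nsmul_eq_mul, hcard]; ring
          have h2 : c * (-2) ≤ 2 * |c| := by
            have := neg_abs_le c; nlinarith
          nlinarith [sq_nonneg c]
  have key : ((n:ℝ)-1) + 2*|c| + 4*c^2*((n:ℝ)-1) = ((n:ℝ)-1) * (1 + (2*|c|/((n:ℝ)-1) + 4*c^2)) := by
    field_simp
    ring
  calc ∑ s ∈ Finset.Ioo 0 n, Real.exp (c * Xc n k s) ≤ ((n:ℝ)-1) + 2*|c| + 4*c^2*((n:ℝ)-1) := step2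
    _ = ((n:ℝ)-1) * (1 + (2*|c|/((n:ℝ)-1) + 4*c^2)) := key
    _ ≤ ((n:ℝ)-1) * Real.exp (2*|c|/((n:ℝ)-1) + 4*c^2) := by
        apply mul_le_mul_of_nonneg_left _ (le_of_lt hN)
        linarith [Real.add_one_le_exp (2*|c|/((n:ℝ)-1) + 4*c^2)]

theorem mgf (n d k : ℕ) (c : ℝ) :
    ∑ f ∈ Fintype.piFinset (fun _ : Fin d => Finset.Ioo 0 n), Real.exp (c * Lc n d k f)
      = (∑ s ∈ Finset.Ioo 0 n, Real.exp (c * Xc n k s)) ^ d := by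
  have e1 : ∀ f : Fin d → ℕ, Real.exp (c * Lc n d k f) = ∏ i, Real.exp (c * Xc n k (f i)) := by
    intro f
    rw [Lc, Finset.mul_sum, Real.exp_sum]
  simp_rw [e1]
  have e2 := Finset.prod_univ_sum (t := fun _ : Fin d => Finset.Ioo 0 n)
    (f := fun _ s => Real.exp (c * Xc n k s))
  rw [← e2]
  simp

theorem markov {d : ℕ} (Ω : Finset (Fin d → ℕ)) (g : (Fin d → ℕ) → ℝ) (b : ℝ) :
    ((Ω.filter fun f => b ≤ g f).card : ℝ) * Real.exp b ≤ ∑ f ∈ Ω, Real.exp (g f) := by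
  calc ((Ω.filter fun f => b ≤ g f).card : ℝ) * Real.exp b
      = ∑ _f ∈ Ω.filter fun f => b ≤ g f, Real.exp b := by rw [Finset.sum_const, nsmul_eq_mul]
    _ ≤ ∑ f ∈ Ω.filter (fun f => b ≤ g f), Real.exp (g f) := by
        apply Finset.sum_le_sum; intro f hf
        exact Real.exp_le_exp.mpr (Finset.mem_filter.mp hf).2
    _ ≤ ∑ f ∈ Ω, Real.exp (g f) := by
        apply Finset.sum_le_sum_of_subset_of_nonneg (Finset.filter_subset _ _)
        intro f _ _; positivity

theorem kbad (ε : ℝ) (hε0 : 0 < ε) (hε1 : ε < 1) (n d k : ℕ) (hn : 2 ≤ n)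
    (hk : k ∈ Finset.Ioo 0 n) (hNe : 8 ≤ ε * ((n:ℝ)-1)) :
    (((Fintype.piFinset (fun _ : Fin d => Finset.Ioo 0 n)).filter
        (fun f => ε * d < |Lc n d k f|)).card : ℝ)
      ≤ 2 * ((n:ℝ)-1)^d * Real.exp (-(d:ℝ) * ε^2 / 32) := by
  set Ω := Fintype.piFinset (fun _ : Fin d => Finset.Ioo 0 n) with hΩ
  set N := ((n:ℝ) - 1) with hNdef
  have hN : (0:ℝ) < N := by
    have : (2:ℝ) ≤ n := by exact_mod_cast hn
    simp only [hNdef]; linarith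
  set t := ε/8 with htdef
  have ht0 : 0 < t := by positivity
  have main : ∀ c : ℝ, |c| = t → ((Ω.filter fun f => t*(ε*d) ≤ c * Lc n d k f).card : ℝ)
      ≤ N^d * Real.exp ((d:ℝ) * (2*t/N + 4*t^2) - t*(ε*d)) := by
    intro c hc
    have hc2 : |c| ≤ 1/2 := by rw [hc, htdef]; linarith
    have hm := markov Ω (fun f => c * Lc n d k f) (t*(ε*d))
    rw [mgf n d k c] at hm
    have hrownn : (0:ℝ) ≤ ∑ s ∈ Finset.Ioo 0 n, Real.exp (c * Xc n k s) :=
      Finset.sum_nonneg fun s _ => (Real.exp_pos _).le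
    have hpow : (∑ s ∈ Finset.Ioo 0 n, Real.exp (c * Xc n k s))^d
        ≤ (N * Real.exp (2*t/N + 4*t^2))^d := by
      apply pow_le_pow_left₀ hrownn
      have := rowbound n k hn hk hc2
      rw [hc] at this
      calc ∑ s ∈ Finset.Ioo 0 n, Real.exp (c * Xc n k s) ≤ N * Real.exp (2*t/N + 4*c^2) := this
        _ = N * Real.exp (2*t/N + 4*t^2) := by
            congr 2
            rw [← sq_abs c, hc]
    have hexp : (N * Real.exp (2*t/N + 4*t^2))^d = N^d * Real.exp ((d:ℝ) * (2*t/N + 4*t^2)) := by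
      rw [mul_pow, ← Real.exp_nat_mul]
    have hcard : ((Ω.filter fun f => t*(ε*d) ≤ c * Lc n d k f).card : ℝ)
        = ((Ω.filter fun f => t*(ε*d) ≤ c * Lc n d k f).card : ℝ) * Real.exp (t*(ε*d))
          * Real.exp (-(t*(ε*d))) := by
      rw [mul_assoc, ← Real.exp_add]; simp
    rw [hcard]
    calc ((Ω.filter fun f => t*(ε*d) ≤ c * Lc n d k f).card : ℝ) * Real.exp (t*(ε*d))
          * Real.exp (-(t*(ε*d)))
        ≤ (N * Real.exp (2*t/N + 4*t^2))^d * Real.exp (-(t*(ε*d))) := by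
          apply mul_le_mul_of_nonneg_right (hm.trans hpow) (Real.exp_pos _).le
      _ = N^d * Real.exp ((d:ℝ) * (2*t/N + 4*t^2) - t*(ε*d)) := by
          rw [hexp, mul_assoc, ← Real.exp_add]; ring_nf
  -- subset of two tails
  have hsub : Ω.filter (fun f => ε * d < |Lc n d k f|) ⊆
      (Ω.filter fun f => t*(ε*d) ≤ t * Lc n d k f) ∪
      (Ω.filter fun f => t*(ε*d) ≤ (-t) * Lc n d k f) := by
    intro f hf
    obtain ⟨hfΩ, hfb⟩ := Finset.mem_filter.mp hf
    rw [Finset.mem_union, Finset.mem_filter, Finset.mem_filter]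
    rcases abs_cases (Lc n d k f) with ⟨he, _⟩ | ⟨he, _⟩
    · left; refine ⟨hfΩ, ?_⟩
      rw [he] at hfb
      exact mul_le_mul_of_nonneg_left hfb.le ht0.le
    · right; refine ⟨hfΩ, ?_⟩
      rw [he] at hfb
      have := mul_le_mul_of_nonneg_left hfb.le ht0.le
      linarith [this]
  have hexpo : (d:ℝ) * (2*t/N + 4*t^2) - t*(ε*d) ≤ -(d:ℝ) * ε^2 / 32 := by
    have h4 : 2*t/N ≤ ε^2/32 := by
      rw [htdef, div_le_div_iff₀ hN (by norm_num)]
      nlinarith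
    have hd0 : (0:ℝ) ≤ (d:ℝ) := Nat.cast_nonneg d
    have hunit : 2*t/N + 4*t^2 - t*ε ≤ -(ε^2/32) := by
      rw [htdef] at *
      nlinarith
    nlinarith
  calc ((Ω.filter (fun f => ε * d < |Lc n d k f|)).card : ℝ)
      ≤ (((Ω.filter fun f => t*(ε*d) ≤ t * Lc n d k f) ∪
          (Ω.filter fun f => t*(ε*d) ≤ (-t) * Lc n d k f)).card : ℝ) := by
        exact_mod_cast Nat.cast_le.mpr (Finset.card_le_card hsub)
    _ ≤ ((Ω.filter fun f => t*(ε*d) ≤ t * Lc n d k f).card : ℝ)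
        + ((Ω.filter fun f => t*(ε*d) ≤ (-t) * Lc n d k f).card : ℝ) := by
        exact_mod_cast Nat.cast_le.mpr (Finset.card_union_le _ _)
    _ ≤ N^d * Real.exp ((d:ℝ) * (2*t/N + 4*t^2) - t*(ε*d))
        + N^d * Real.exp ((d:ℝ) * (2*t/N + 4*t^2) - t*(ε*d)) := by
        have h1 := main t (abs_of_pos ht0)
        have h2 := main (-t) (by rw [abs_neg, abs_of_pos ht0])
        exact add_le_add h1 h2
    _ ≤ 2 * N^d * Real.exp (-(d:ℝ) * ε^2 / 32) := by
        have := Real.exp_le_exp.mpr hexpo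
        nlinarith [pow_nonneg hN.le d, Real.exp_pos ((d:ℝ) * (2*t/N + 4*t^2) - t*(ε*d))]

theorem collcard (n d : ℕ) (hn : 2 ≤ n) (i j : Fin d) (P : ℕ → ℕ → Prop)
    [∀ a b : ℕ, Decidable (P a b)]
    (hrec : ∀ f g : Fin d → ℕ, P (f i) (f j) → P (g i) (g j) →
      (∀ x, x ≠ j → f x = g x) → f j = g j) :
    ((Fintype.piFinset (fun _ : Fin d => Finset.Ioo 0 n)).filter
      (fun f => P (f i) (f j))).card ≤ (n-1)^(d-1) := by
  classical
  set B : Fin d → Finset ℕ := Function.update (fun _ => Finset.Ioo 0 n) j {1} with hB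
  have h1 : ((Fintype.piFinset (fun _ : Fin d => Finset.Ioo 0 n)).filter
      (fun f => P (f i) (f j))).card ≤ (Fintype.piFinset B).card := by
    apply Finset.card_le_card_of_injOn (fun f => Function.update f j 1)
    · intro f hf
      rw [Finset.mem_coe, Finset.mem_filter, Fintype.mem_piFinset] at hf
      rw [Finset.mem_coe, Fintype.mem_piFinset]
      intro x
      by_cases hx : x = j
      · subst hx
        simp [hB]
      · beta_reduce
        rw [Function.update_of_ne hx, hB, Function.update_of_ne hx]
        exact hf.1 x
    · intro f hf g hg hfg
      rw [Finset.mem_coe, Finset.mem_filter] at hf hg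
      have hoff : ∀ x, x ≠ j → f x = g x := by
        intro x hx
        have h := congrFun hfg x
        simp only [Function.update_apply, if_neg hx] at h
        exact h
      funext x
      by_cases hx : x = j
      · subst hx; exact hrec f g hf.2 hg.2 hoff
      · exact hoff x hx
  have h2 : (Fintype.piFinset B).card = (n-1)^(d-1) := by
    rw [Fintype.card_piFinset]
    have e : ∏ x, (B x).card = ∏ x, Function.update (fun _ : Fin d => n-1) j 1 x := by
      apply Finset.prod_congr rfl
      intro x _
      by_cases hx : x = j
      · subst hx; simp [hB]
      · simp [hB, Function.update_apply, if_neg hx]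
    rw [e, Finset.prod_update_of_mem (Finset.mem_univ j), one_mul, Finset.prod_const]
    congr 1
    rw [Finset.card_sdiff_of_subset (Finset.subset_univ _), Finset.card_univ, Fintype.card_fin,
      Finset.card_singleton]
  exact le_trans h1 (le_of_eq h2)

theorem collA (n d : ℕ) (hn : 2 ≤ n) (i j : Fin d) :
    ((Fintype.piFinset (fun _ : Fin d => Finset.Ioo 0 n)).filter
      (fun f => f i + f j = n)).card ≤ (n-1)^(d-1) := by
  apply collcard n d hn i j (fun a b => a + b = n)
  intro f g hf hg hoff
  by_cases hij : i = j
  · subst hij; omega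
  · have := hoff i hij; omega

theorem collB (n d : ℕ) (hn : 2 ≤ n) (i j : Fin d) (hij : i ≠ j) :
    ((Fintype.piFinset (fun _ : Fin d => Finset.Ioo 0 n)).filter
      (fun f => f i = f j)).card ≤ (n-1)^(d-1) := by
  apply collcard n d hn i j (fun a b => a = b)
  intro f g hf hg hoff
  have := hoff i hij; omega

theorem goodf (ε : ℝ) (hε0 : 0 < ε) (hε1 : ε < 1) (n d : ℕ) (hn : 2 ≤ n) (hd : 1 ≤ d)
    (hNe : 8 ≤ ε * ((n:ℝ)-1))
    (hA : 4 * ((n:ℝ)-1) ≤ Real.exp ((d:ℝ) * ε^2 / 32))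
    (hB : 8 * d^2 ≤ n - 1) :
    ∃ f : Fin d → ℕ, (∀ i, f i ∈ Finset.Ioo 0 n) ∧ (∀ i j, f i + f j ≠ n) ∧
      Function.Injective f ∧ (∀ k ∈ Finset.Ioo 0 n, |Lc n d k f| ≤ ε * d) := by
  set Ω := Fintype.piFinset (fun _ : Fin d => Finset.Ioo 0 n) with hΩ
  set E1 := (Finset.Ioo 0 n).biUnion (fun k => Ω.filter (fun f => ε*d < |Lc n d k f|)) with hE1
  set E2 := (Finset.univ : Finset (Fin d × Fin d)).biUnion
    (fun p => Ω.filter (fun f => f p.1 + f p.2 = n)) with hE2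
  set E3 := ((Finset.univ : Finset (Fin d × Fin d)).filter (fun p => p.1 ≠ p.2)).biUnion
    (fun p => Ω.filter (fun f => f p.1 = f p.2)) with hE3
  have hNR : (1:ℝ) ≤ (n:ℝ) - 1 := by
    have : (2:ℝ) ≤ n := by exact_mod_cast hn
    linarith
  have hNpos : (0:ℝ) < ((n:ℝ)-1)^d := by positivity
  have hcastN : ((n - 1 : ℕ) : ℝ) = (n:ℝ) - 1 := by
    rw [Nat.cast_sub (by omega : 1 ≤ n), Nat.cast_one]
  -- card bounds
  have hcΩ : (Ω.card : ℝ) = ((n:ℝ)-1)^d := by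
    rw [hΩ, Fintype.card_piFinset]
    simp only [Nat.card_Ioo, Nat.sub_zero]
    rw [Finset.prod_const, Finset.card_univ, Fintype.card_fin]
    push_cast [hcastN]
    ring
  have hc1 : (E1.card : ℝ) ≤ ((n:ℝ)-1)^d / 2 := by
    calc (E1.card : ℝ) ≤ ∑ k ∈ Finset.Ioo 0 n,
          ((Ω.filter (fun f => ε*d < |Lc n d k f|)).card : ℝ) := by
          exact_mod_cast Nat.cast_le.mpr (Finset.card_biUnion_le)
      _ ≤ ∑ k ∈ Finset.Ioo 0 n, 2 * ((n:ℝ)-1)^d * Real.exp (-(d:ℝ) * ε^2 / 32) := by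
          apply Finset.sum_le_sum
          intro k hk
          exact kbad ε hε0 hε1 n d k hn hk hNe
      _ = ((n:ℝ)-1) * (2 * ((n:ℝ)-1)^d * Real.exp (-(d:ℝ) * ε^2 / 32)) := by
          rw [Finset.sum_const, nsmul_eq_mul, Nat.card_Ioo, Nat.sub_zero, hcastN]
      _ ≤ ((n:ℝ)-1)^d / 2 := by
          have hE0 : (0:ℝ) < Real.exp (-(d:ℝ) * ε^2 / 32) := Real.exp_pos _
          have hxx : Real.exp (-(d:ℝ) * ε^2 / 32) * Real.exp ((d:ℝ) * ε^2 / 32) = 1 := by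
            rw [← Real.exp_add, show -(d:ℝ) * ε^2 / 32 + (d:ℝ) * ε^2 / 32 = 0 by ring,
              Real.exp_zero]
          have h1 : ((n:ℝ)-1) * Real.exp (-(d:ℝ) * ε^2 / 32) ≤ 1/4 := by
            nlinarith [mul_le_mul_of_nonneg_right hA hE0.le]
          nlinarith [mul_le_mul_of_nonneg_left h1 (le_of_lt hNpos)]
  have hcoll : ∀ (E : Finset (Fin d → ℕ)), (E.card : ℕ) ≤ d^2 * (n-1)^(d-1) →
      (E.card : ℝ) ≤ ((n:ℝ)-1)^d / 8 := by
    intro E hE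
    have h1 : (E.card : ℝ) ≤ (d:ℝ)^2 * ((n:ℝ)-1)^(d-1) := by
      calc (E.card : ℝ) ≤ ((d^2 * (n-1)^(d-1) : ℕ) : ℝ) := Nat.cast_le.mpr hE
        _ = (d:ℝ)^2 * ((n:ℝ)-1)^(d-1) := by push_cast [hcastN]; ring
    have h2 : (d:ℝ)^2 ≤ ((n:ℝ)-1)/8 := by
      have : ((8 * d^2 : ℕ) : ℝ) ≤ ((n - 1 : ℕ) : ℝ) := Nat.cast_le.mpr hB
      rw [hcastN] at this
      push_cast at this
      linarith
    calc (E.card : ℝ) ≤ (d:ℝ)^2 * ((n:ℝ)-1)^(d-1) := h1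
      _ ≤ (((n:ℝ)-1)/8) * ((n:ℝ)-1)^(d-1) := by
          apply mul_le_mul_of_nonneg_right h2 (by positivity)
      _ = ((n:ℝ)-1)^d / 8 := by
          rw [div_mul_eq_mul_div, ← pow_succ']
          congr 2
          omega
  have hc2 : (E2.card : ℝ) ≤ ((n:ℝ)-1)^d / 8 := by
    apply hcoll
    calc E2.card ≤ ∑ p : Fin d × Fin d,
          (Ω.filter (fun f => f p.1 + f p.2 = n)).card := Finset.card_biUnion_le
      _ ≤ ∑ _p : Fin d × Fin d, (n-1)^(d-1) := by
          apply Finset.sum_le_sum; intro p _; exact collA n d hn p.1 p.2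
      _ = d^2 * (n-1)^(d-1) := by
          rw [Finset.sum_const, Finset.card_univ, Fintype.card_prod, Fintype.card_fin,
            smul_eq_mul]
          ring
  have hc3 : (E3.card : ℝ) ≤ ((n:ℝ)-1)^d / 8 := by
    apply hcoll
    calc E3.card ≤ ∑ p ∈ (Finset.univ : Finset (Fin d × Fin d)).filter (fun p => p.1 ≠ p.2),
          (Ω.filter (fun f => f p.1 = f p.2)).card := Finset.card_biUnion_le
      _ ≤ ∑ p ∈ (Finset.univ : Finset (Fin d × Fin d)).filter (fun p => p.1 ≠ p.2), (n-1)^(d-1) := by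
          apply Finset.sum_le_sum; intro p hp
          exact collB n d hn p.1 p.2 (Finset.mem_filter.mp hp).2
      _ ≤ d^2 * (n-1)^(d-1) := by
          rw [Finset.sum_const, smul_eq_mul]
          apply Nat.mul_le_mul_right
          calc ((Finset.univ : Finset (Fin d × Fin d)).filter (fun p => p.1 ≠ p.2)).card
              ≤ (Finset.univ : Finset (Fin d × Fin d)).card := Finset.card_filter_le _ _
            _ = d^2 := by rw [Finset.card_univ, Fintype.card_prod, Fintype.card_fin]; ring
  have hlt : (E1 ∪ E2 ∪ E3).card < Ω.card := by
    have : (((E1 ∪ E2 ∪ E3).card) : ℝ) < (Ω.card : ℝ) := by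
      calc (((E1 ∪ E2 ∪ E3).card) : ℝ)
          ≤ (E1.card : ℝ) + (E2.card : ℝ) + (E3.card : ℝ) := by
            have h12 := Finset.card_union_le E1 E2
            have h123 := Finset.card_union_le (E1 ∪ E2) E3
            have hN : (E1 ∪ E2 ∪ E3).card ≤ E1.card + E2.card + E3.card := by omega
            exact_mod_cast hN
        _ ≤ ((n:ℝ)-1)^d / 2 + ((n:ℝ)-1)^d / 8 + ((n:ℝ)-1)^d / 8 := by
            linarith
        _ < ((n:ℝ)-1)^d := by linarith
        _ = (Ω.card : ℝ) := hcΩ.symm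
    exact_mod_cast this
  have hne : (Ω \ (E1 ∪ E2 ∪ E3)).Nonempty := by
    rw [← Finset.card_pos]
    have h2 := Finset.le_card_sdiff (E1 ∪ E2 ∪ E3) Ω
    omega
  obtain ⟨f, hf⟩ := hne
  rw [Finset.mem_sdiff] at hf
  obtain ⟨hfΩ, hfBad⟩ := hf
  rw [Finset.mem_union, Finset.mem_union] at hfBad
  push_neg at hfBad
  obtain ⟨⟨hf1, hf2⟩, hf3⟩ := hfBad
  refine ⟨f, ?_, ?_, ?_, ?_⟩
  · intro i; exact (Fintype.mem_piFinset.mp hfΩ) i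
  · intro i j hcon
    apply hf2
    rw [hE2, Finset.mem_biUnion]
    exact ⟨(i,j), Finset.mem_univ _, Finset.mem_filter.mpr ⟨hfΩ, hcon⟩⟩
  · intro i j hcon
    by_contra hne2
    apply hf3
    rw [hE3, Finset.mem_biUnion]
    exact ⟨(i,j), Finset.mem_filter.mpr ⟨Finset.mem_univ _, hne2⟩,
      Finset.mem_filter.mpr ⟨hfΩ, hcon⟩⟩
  · intro k hk
    by_contra hcon
    apply hf1
    rw [hE1, Finset.mem_biUnion]
    exact ⟨k, hk, Finset.mem_filter.mpr ⟨hfΩ, not_le.mp hcon⟩⟩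

theorem pairexp (n k s : ℕ) (hn : 2 ≤ n) (hs : s ∈ Finset.Ioo 0 n) :
    Complex.exp (2 * Real.pi * Complex.I * k * s / n)
      + Complex.exp (2 * Real.pi * Complex.I * k * ((n - s : ℕ) : ℂ) / n)
      = ((Xc n k s : ℝ) : ℂ) := by
  obtain ⟨hs0, hsn⟩ := Finset.mem_Ioo.mp hs
  have hnC : (n:ℂ) ≠ 0 := Nat.cast_ne_zero.mpr (by omega)
  set θ : ℝ := 2 * Real.pi * k * s / n with hθ
  have h1 : 2 * Real.pi * Complex.I * k * s / n = (θ:ℂ) * Complex.I := by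
    rw [hθ]; push_cast; field_simp
  have hcast : ((n - s : ℕ) : ℂ) = (n:ℂ) - s := by
    push_cast [Nat.cast_sub hsn.le]; ring
  have h2 : 2 * Real.pi * Complex.I * k * ((n - s : ℕ) : ℂ) / n
      = (k:ℂ) * (2 * Real.pi * Complex.I) + (-(θ:ℂ)) * Complex.I := by
    rw [hcast, hθ]; push_cast; field_simp; ring
  rw [h1, h2, Complex.exp_add, Complex.exp_nat_mul_two_pi_mul_I, one_mul]
  have h3 : ((Xc n k s : ℝ) : ℂ) = 2 * Complex.cos (θ:ℂ) := by
    rw [Xc, ← hθ]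
    push_cast [Complex.ofReal_cos]
    ring
  rw [h3, Complex.exp_mul_I, Complex.exp_mul_I, Complex.cos_neg, Complex.sin_neg]
  ring

theorem buildS (ε : ℝ) (hε0 : 0 < ε) (n d : ℕ) (hn : 2 ≤ n) (hd : 1 ≤ d)
    (f : Fin d → ℕ) (hmem : ∀ i, f i ∈ Finset.Ioo 0 n) (hsum : ∀ i j, f i + f j ≠ n)
    (hinj : Function.Injective f) (hL : ∀ k ∈ Finset.Ioo 0 n, |Lc n d k f| ≤ ε * d) :
    ∃ S : Finset ℕ, S.Nonempty ∧ S ⊆ Finset.Ioo 0 n ∧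
      (∀ s ∈ Finset.Ioo 0 n, (s ∈ S ↔ n - s ∈ S)) ∧ d ≤ S.card ∧ S.card ≤ 2 * d ∧
      ∀ k ∈ Finset.Ioo 0 n,
        ‖∑ s ∈ S, Complex.exp (2 * Real.pi * Complex.I * (k : ℂ) * (s : ℂ) / (n : ℂ))‖
          ≤ ε * d := by
  classical
  set T := Finset.image f Finset.univ with hT
  set T' := T.image (fun s => n - s) with hT'
  have hTmem : ∀ s ∈ T, s ∈ Finset.Ioo 0 n := by
    intro s hs
    obtain ⟨i, _, rfl⟩ := Finset.mem_image.mp hs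
    exact hmem i
  have hT'mem : ∀ s ∈ T', s ∈ Finset.Ioo 0 n := by
    intro s hs
    obtain ⟨u, hu, rfl⟩ := Finset.mem_image.mp hs
    have := Finset.mem_Ioo.mp (hTmem u hu)
    rw [Finset.mem_Ioo]; omega
  refine ⟨T ∪ T', ?_, ?_, ?_, ?_, ?_, ?_⟩
  · refine ⟨f ⟨0, hd⟩, ?_⟩
    rw [Finset.mem_union, hT]
    exact Or.inl (Finset.mem_image.mpr ⟨⟨0, hd⟩, Finset.mem_univ _, rfl⟩)
  · intro s hs
    rcases Finset.mem_union.mp hs with h | h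
    · exact hTmem s h
    · exact hT'mem s h
  · -- symmetry
    have hfwd : ∀ s ∈ T ∪ T', n - s ∈ T ∪ T' := by
      intro s hs
      rcases Finset.mem_union.mp hs with h | h
      · exact Finset.mem_union_right _ (Finset.mem_image.mpr ⟨s, h, rfl⟩)
      · obtain ⟨u, hu, rfl⟩ := Finset.mem_image.mp h
        have := Finset.mem_Ioo.mp (hTmem u hu)
        rw [show n - (n - u) = u by omega]
        exact Finset.mem_union_left _ hu
    intro s hs
    constructor
    · exact hfwd s
    · intro h
      have := hfwd _ h
      rwa [show n - (n - s) = s by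
        have := Finset.mem_Ioo.mp hs; omega] at this
  · have hTcard : T.card = d := by
      rw [hT, Finset.card_image_of_injective _ hinj, Finset.card_univ, Fintype.card_fin]
    calc d = T.card := hTcard.symm
      _ ≤ (T ∪ T').card := Finset.card_le_card Finset.subset_union_left
  · calc (T ∪ T').card ≤ T.card + T'.card := Finset.card_union_le _ _
      _ ≤ d + d := by
          have h1 : T.card ≤ d := by
            rw [hT]
            calc (Finset.image f Finset.univ).card ≤ Finset.univ.card := Finset.card_image_le
              _ = d := by rw [Finset.card_univ, Fintype.card_fin]
          have h2 : T'.card ≤ T.card := Finset.card_image_le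
          omega
      _ = 2 * d := by ring
  · intro k hk
    have hdisj : Disjoint T T' := by
      rw [Finset.disjoint_left]
      intro s hsT hsT'
      obtain ⟨i, _, hfi⟩ := Finset.mem_image.mp hsT
      obtain ⟨u, hu, huv⟩ := Finset.mem_image.mp hsT'
      obtain ⟨j, _, hfj⟩ := Finset.mem_image.mp hu
      have hun := Finset.mem_Ioo.mp (hTmem u hu)
      exact hsum i j (by omega)
    rw [Finset.sum_union hdisj]
    have hinj' : Set.InjOn (fun s => n - s) T := by
      intro a ha b hb hab
      have ha' := Finset.mem_Ioo.mp (hTmem a ha)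
      have hb' := Finset.mem_Ioo.mp (hTmem b hb)
      simp only at hab
      omega
    rw [hT', Finset.sum_image hinj']
    rw [← Finset.sum_add_distrib]
    rw [hT, Finset.sum_image (fun a _ b _ h => hinj h)]
    have heq : ∀ i : Fin d,
        Complex.exp (2 * Real.pi * Complex.I * (k:ℂ) * ((f i : ℕ):ℂ) / n)
          + Complex.exp (2 * Real.pi * Complex.I * (k:ℂ) * ((n - f i : ℕ):ℂ) / n)
        = ((Xc n k (f i) : ℝ) : ℂ) := fun i => pairexp n k (f i) hn (hmem i)
    rw [Finset.sum_congr rfl (fun i _ => heq i)]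
    rw [← Complex.ofReal_sum]
    rw [Complex.norm_real, Real.norm_eq_abs]
    have : ∑ i, Xc n k (f i) = Lc n d k f := rfl
    rw [this]
    exact hL k hk

theorem threshold (ε : ℝ) (hε0 : 0 < ε) :
    ∃ n₀ : ℕ, ∀ n : ℕ, n₀ ≤ n → 2 ≤ n ∧ 8 ≤ ε * ((n:ℝ)-1) ∧
      8 * (⌈64 * Real.log n / ε^2⌉₊)^2 ≤ n - 1 := by
  set a : ℝ := 64 / ε^2 with ha
  have ha0 : 0 < a := by positivity
  set c : ℝ := 8*a^2 + 8 with hc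
  have hc0 : 0 < c := by positivity
  have h2 : ∀ᶠ x:ℝ in Filter.atTop, c*((Real.log x)^2+1) ≤ x - 1 := by
    have hlo := (Real.isLittleO_pow_log_id_atTop (n := 2)).def
      (show (0:ℝ) < 1/(4*c) by positivity)
    filter_upwards [hlo, Filter.eventually_ge_atTop (1:ℝ),
      Filter.eventually_ge_atTop (4*c), Filter.eventually_ge_atTop (2:ℝ)]
      with x hx h1x h4c h2x
    simp only [Real.norm_eq_abs, id] at hx
    have habs : |Real.log x ^ 2| = Real.log x ^ 2 := abs_of_nonneg (sq_nonneg _)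
    have hxa : |x| = x := abs_of_nonneg (by linarith)
    rw [habs, hxa] at hx
    have hcl : c * (Real.log x)^2 ≤ x/4 := by
      have e1 : c * (1/(4*c)*x) = x/4 := by field_simp
      have e2 := mul_le_mul_of_nonneg_left hx hc0.le
      linarith
    nlinarith
  have h3 : ∀ᶠ x:ℝ in Filter.atTop, 8 ≤ ε * (x-1) := by
    filter_upwards [Filter.eventually_ge_atTop (8/ε + 1)] with x hx
    have : 8/ε ≤ x - 1 := by linarith
    calc (8:ℝ) = ε * (8/ε) := by field_simp
      _ ≤ ε * (x-1) := by apply mul_le_mul_of_nonneg_left this hε0.le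
  have hnat := (tendsto_natCast_atTop_atTop (R := ℝ)).eventually (h2.and h3)
  obtain ⟨n₁, hn₁⟩ := Filter.eventually_atTop.mp hnat
  refine ⟨max n₁ 2, fun n hn => ?_⟩
  have hn2 : 2 ≤ n := le_trans (le_max_right _ _) hn
  obtain ⟨hA, hB⟩ := hn₁ n (le_trans (le_max_left _ _) hn)
  refine ⟨hn2, hB, ?_⟩
  -- nat inequality
  have hL0 : 0 ≤ Real.log n := Real.log_nonneg (by exact_mod_cast Nat.one_le_of_lt hn2)
  have hD : ((⌈64 * Real.log n / ε^2⌉₊ : ℕ) : ℝ) ≤ a * Real.log n + 1 := by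
    rw [ha]
    have := Nat.ceil_lt_add_one (show (0:ℝ) ≤ 64 * Real.log n / ε^2 by positivity)
    calc ((⌈64 * Real.log n / ε^2⌉₊ : ℕ) : ℝ) ≤ 64 * Real.log n / ε^2 + 1 := this.le
      _ = 64 / ε^2 * Real.log n + 1 := by ring
  have hkey : 8 * (((⌈64 * Real.log n / ε^2⌉₊ : ℕ) : ℝ))^2 ≤ (n:ℝ) - 1 := by
    have hsq : (((⌈64 * Real.log n / ε^2⌉₊ : ℕ) : ℝ))^2 ≤ (a * Real.log n + 1)^2 := by
      apply sq_le_sq' _ hD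
      have : (0:ℝ) ≤ ((⌈64 * Real.log n / ε^2⌉₊ : ℕ) : ℝ) := Nat.cast_nonneg _
      nlinarith
    have hbound : 8 * (a * Real.log n + 1)^2 ≤ c * ((Real.log n)^2 + 1) := by
      rw [hc]; nlinarith [sq_nonneg (a - Real.log n)]
    linarith
  have hc1 : ((n - 1 : ℕ) : ℝ) = (n:ℝ) - 1 := by
    rw [Nat.cast_sub (by omega : 1 ≤ n), Nat.cast_one]
  have : ((8 * (⌈64 * Real.log n / ε^2⌉₊)^2 : ℕ) : ℝ) ≤ ((n - 1 : ℕ) : ℝ) := by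
    rw [hc1]
    push_cast
    push_cast at hkey
    linarith
  exact_mod_cast this

theorem stmt_19 (ε : ℝ) (hε0 : 0 < ε) (hε1 : ε < 1) :
    ∃ C : ℝ, 0 < C ∧ ∀ n : ℕ, 2 ≤ n →
      ∃ S : Finset ℕ, S.Nonempty ∧ S ⊆ Finset.Ioo 0 n ∧
        (∀ s ∈ Finset.Ioo 0 n, (s ∈ S ↔ n - s ∈ S)) ∧
        (S.card : ℝ) ≤ C * Real.logb 2 n ∧
        ∀ k ∈ Finset.Ioo 0 n,
          ‖∑ s ∈ S, Complex.exp
              (2 * Real.pi * Complex.I * (k : ℂ) * (s : ℂ) / (n : ℂ))‖ ≤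
            max ε (1 / ((n : ℝ) - 1)) * S.card := by
  obtain ⟨n₀, hth⟩ := threshold ε hε0
  set C : ℝ := max ((n₀:ℝ) + 2) (128 * Real.log 2 / ε^2 + 2) with hC
  have hCpos : 0 < C := lt_of_lt_of_le (by positivity : (0:ℝ) < (n₀:ℝ)+2) (le_max_left _ _)
  refine ⟨C, hCpos, ?_⟩
  intro n hn2
  have hn1R : (2:ℝ) ≤ (n:ℝ) := by exact_mod_cast hn2
  have hlog2 : (0:ℝ) < Real.log 2 := Real.log_pos (by norm_num)
  have hlogb : 1 ≤ Real.logb 2 n := by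
    rw [Real.logb, le_div_iff₀ hlog2, one_mul]
    exact Real.log_le_log (by norm_num) hn1R
  have hNcast : ((Finset.Ioo 0 n).card : ℝ) = (n:ℝ) - 1 := cardIoo n hn2
  by_cases hbig : n₀ ≤ n
  · obtain ⟨-, hNe, hB⟩ := hth n hbig
    set d := ⌈64 * Real.log n / ε^2⌉₊ with hdd
    have hlogn : 0 < Real.log n := Real.log_pos (by linarith)
    have hd : 1 ≤ d := Nat.ceil_pos.mpr (by positivity)
    have hA : 4 * ((n:ℝ)-1) ≤ Real.exp ((d:ℝ) * ε^2 / 32) := by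
      have h1 : 64 * Real.log n / ε^2 ≤ (d:ℝ) := Nat.le_ceil _
      have h2 : 2 * Real.log n ≤ (d:ℝ) * ε^2/32 := by
        have h3 := mul_le_mul_of_nonneg_right h1 (le_of_lt (show (0:ℝ) < ε^2/32 by positivity))
        calc 2 * Real.log n = (64 * Real.log n / ε^2) * (ε^2/32) := by field_simp; ring
          _ ≤ (d:ℝ) * (ε^2/32) := h3
          _ = (d:ℝ) * ε^2/32 := by ring
      calc 4*((n:ℝ)-1) ≤ (n:ℝ)^2 := by nlinarith
        _ = Real.exp (2 * Real.log n) := by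
            rw [show 2*Real.log n = Real.log n + Real.log n by ring, Real.exp_add,
              Real.exp_log (by linarith : (0:ℝ) < n)]
            ring
        _ ≤ Real.exp ((d:ℝ)*ε^2/32) := Real.exp_le_exp.mpr h2
    obtain ⟨f, hmem, hsum, hinj, hL⟩ := goodf ε hε0 hε1 n d hn2 hd hNe hA hB
    obtain ⟨S, hSne, hSsub, hSsym, hSd, hScard, hSeig⟩ :=
      buildS ε hε0 n d hn2 hd f hmem hsum hinj hL
    refine ⟨S, hSne, hSsub, hSsym, ?_, ?_⟩
    · have h2d : (S.card : ℝ) ≤ 2 * d := by exact_mod_cast hScard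
      have hdle : (d:ℝ) ≤ 64 * Real.log n / ε^2 + 1 :=
        (Nat.ceil_lt_add_one (by positivity : (0:ℝ) ≤ 64 * Real.log n / ε^2)).le
      have hlogeq : Real.log n = Real.log 2 * Real.logb 2 n := by
        rw [Real.logb]
        field_simp
      calc (S.card:ℝ) ≤ 2*(64 * Real.log n / ε^2 + 1) := by linarith
        _ = 128 * (Real.log 2 * Real.logb 2 n) / ε^2 + 2 := by rw [← hlogeq]; ring
        _ ≤ (128 * Real.log 2 / ε^2 + 2) * Real.logb 2 n := by
            have hexp : (128 * Real.log 2 / ε^2 + 2) * Real.logb 2 n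
                = 128 * (Real.log 2 * Real.logb 2 n) / ε^2 + 2 * Real.logb 2 n := by ring
            rw [hexp]
            linarith
        _ ≤ C * Real.logb 2 n := by
            apply mul_le_mul_of_nonneg_right (le_max_right _ _) (by linarith)
    · intro k hk
      calc ‖∑ s ∈ S, Complex.exp
              (2 * Real.pi * Complex.I * (k : ℂ) * (s : ℂ) / (n : ℂ))‖
          ≤ ε * d := hSeig k hk
        _ ≤ ε * S.card := by
            apply mul_le_mul_of_nonneg_left _ hε0.le
            exact_mod_cast hSd
        _ ≤ max ε (1/((n:ℝ)-1)) * S.card := by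
            apply mul_le_mul_of_nonneg_right (le_max_left _ _) (Nat.cast_nonneg _)
  · push_neg at hbig
    refine ⟨Finset.Ioo 0 n, ⟨1, Finset.mem_Ioo.mpr (by omega)⟩, le_refl _, ?_, ?_, ?_⟩
    · intro s hs
      have hs' := Finset.mem_Ioo.mp hs
      constructor
      · intro _; exact Finset.mem_Ioo.mpr (by omega)
      · intro _; exact hs
    · rw [hNcast]
      calc (n:ℝ) - 1 ≤ (n₀:ℝ) + 2 := by
            have : (n:ℝ) ≤ (n₀:ℝ) := by exact_mod_cast hbig.le
            linarith
        _ ≤ C := le_max_left _ _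
        _ = C * 1 := (mul_one _).symm
        _ ≤ C * Real.logb 2 n := by
            apply mul_le_mul_of_nonneg_left hlogb hCpos.le
    · intro k hk
      rw [sumIoo n k hk]
      have habs : ‖(-1:ℂ)‖ = 1 := by simp
      rw [habs, hNcast]
      have hNpos : (0:ℝ) < (n:ℝ) - 1 := by linarith
      have hmax : 1/((n:ℝ)-1) ≤ max ε (1/((n:ℝ)-1)) := le_max_right _ _
      calc (1:ℝ) = (1/((n:ℝ)-1)) * ((n:ℝ)-1) := by field_simp
        _ ≤ max ε (1/((n:ℝ)-1)) * ((n:ℝ)-1) :=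
            mul_le_mul_of_nonneg_right hmax hNpos.le
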